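/- Let L/F and M/F be Galois extensions inside a common field with L ∩ M = F. Then the p-socle of LM/F is the compositum of the p-socles of L/F and M/F. -/

import Mathlib

open IntermediateField

/-- The `p`-socle of an intermediate field `K` of `Ω/F`: the compositum of all degree-`p`
Galois (equivalently, cyclic of degree `p`) subextensions of `K/F`. -/
noncomputable def pSocle (p : ℕ) {F Ω : Type*} [Field F] [Field Ω] [Algebra F Ω]
    (K : IntermediateField F Ω) : IntermediateField F Ω :=
  ⨆ E ∈ {E : IntermediateField F Ω | E ≤ K ∧ IsGalois F E ∧ Module.finrank F E = p}, E

section AuxGroup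

open scoped Pointwise

/-- If `A`, `B` are disjoint normal subgroups, then `((A ⊓ N) ⊔ B) ⊓ ((B ⊓ N) ⊔ A) ≤ N`. -/
lemma auxGroupInf {G : Type*} [Group G] (A B N : Subgroup G)
    (hA : A.Normal) (hB : B.Normal) (hAB : A ⊓ B = ⊥) :
    ((A ⊓ N) ⊔ B) ⊓ ((B ⊓ N) ⊔ A) ≤ N := by
  haveI := hB; haveI := hA
  intro g hg
  obtain ⟨hg1, hg2⟩ := hg
  have h1 : g ∈ (((A ⊓ N) : Subgroup G) : Set G) * (B : Set G) := by
    rw [← Subgroup.mul_normal (A ⊓ N) B]; exact hg1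
  have h2 : g ∈ (((B ⊓ N) : Subgroup G) : Set G) * (A : Set G) := by
    rw [← Subgroup.mul_normal (B ⊓ N) A]; exact hg2
  obtain ⟨na, hna, b, hb, rfl⟩ := h1
  obtain ⟨nb, hnb, a, ha, heq⟩ := h2
  have hcomm : Commute nb a :=
    Subgroup.commute_of_normal_of_disjoint B A hB hA
      (by rw [disjoint_iff, inf_comm, hAB]) nb a hnb.1 ha
  have h : na * b = a * nb := by dsimp only at heq; rw [← heq, hcomm.eq]
  have key : a⁻¹ * na = nb * b⁻¹ := by
    rw [inv_mul_eq_iff_eq_mul, ← mul_assoc, eq_mul_inv_iff_mul_eq]; exact h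
  have hmem : a⁻¹ * na ∈ A ⊓ B :=
    ⟨A.mul_mem (A.inv_mem ha) hna.1, key ▸ B.mul_mem hnb.1 (B.inv_mem hb)⟩
  rw [hAB, Subgroup.mem_bot] at hmem
  have hna_eq : na = a := (inv_mul_eq_one.mp hmem).symm
  have hnb_eq : nb = b := mul_inv_eq_one.mp (key ▸ hmem)
  exact N.mul_mem (hna.2) (hnb_eq ▸ hnb.2)

/-- If `A ⊔ NA = ⊤` and `A ⊓ N ≤ NA` with everything suitably normal, then
`NA.index` divides `N.index`. -/
lemma auxIndexDvd {G : Type*} [Group G] (A NA N : Subgroup G)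
    (hNA : NA.Normal) (hN : N.Normal) (hsur : A ⊔ NA = ⊤) (h2 : A ⊓ N ≤ NA) :
    NA.index ∣ N.index := by
  haveI := hNA; haveI := hN
  let φ : A →* G ⧸ NA := (QuotientGroup.mk' NA).comp A.subtype
  have hφsur : Function.Surjective φ := by
    intro q
    obtain ⟨g, rfl⟩ := QuotientGroup.mk'_surjective NA q
    have hg : g ∈ ((A : Set G) * (NA : Set G)) := by
      rw [← Subgroup.mul_normal A NA, hsur]; trivial
    obtain ⟨a, ha, n, hn, rfl⟩ := hg
    refine ⟨⟨a, ha⟩, ?_⟩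
    show QuotientGroup.mk' NA a = QuotientGroup.mk' NA (a * n)
    rw [QuotientGroup.mk'_eq_mk']
    exact ⟨n, hn, rfl⟩
  have hker : N.subgroupOf A ≤ φ.ker := by
    intro x hx
    have : (x : G) ∈ NA := h2 ⟨x.2, hx⟩
    simpa [φ, MonoidHom.mem_ker, QuotientGroup.eq_one_iff] using this
  calc NA.index = Nat.card (G ⧸ NA) := Subgroup.index_eq_card NA
    _ = Nat.card (A ⧸ φ.ker) :=
        (Nat.card_congr (QuotientGroup.quotientKerEquivOfSurjective φ hφsur).toEquiv).symm
    _ = φ.ker.index := (Subgroup.index_eq_card _).symm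
    _ ∣ (N.subgroupOf A).index := Subgroup.index_dvd_of_le hker
    _ = N.relIndex A := rfl
    _ ∣ N.index := Subgroup.relIndex_dvd_index_of_normal N A

end AuxGroup

section AuxGalois

variable {F T : Type*} [Field F] [Field T] [Algebra F T]

lemma auxFixingAntitone {X Y : IntermediateField F T} (h : X ≤ Y) :
    fixingSubgroup Y ≤ fixingSubgroup X := fun σ hσ => by
  rw [IntermediateField.mem_fixingSubgroup_iff] at hσ ⊢
  exact fun x hx => hσ x (h hx)

lemma auxFixingSup (X Y : IntermediateField F T) :
    fixingSubgroup (X ⊔ Y) = fixingSubgroup X ⊓ fixingSubgroup Y := by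
  apply le_antisymm
  · exact le_inf (auxFixingAntitone le_sup_left) (auxFixingAntitone le_sup_right)
  · rw [← IntermediateField.le_iff_le]
    exact sup_le ((IntermediateField.le_iff_le _ _).mpr inf_le_left)
      ((IntermediateField.le_iff_le _ _).mpr inf_le_right)

lemma auxFixedAntitone {H K : Subgroup (T ≃ₐ[F] T)} (h : H ≤ K) :
    fixedField K ≤ fixedField H := fun x hx σ => hx ⟨σ, h σ.2⟩

lemma auxFixedSup (H K : Subgroup (T ≃ₐ[F] T)) :
    fixedField (H ⊔ K) = fixedField H ⊓ fixedField K := by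
  apply le_antisymm
  · exact le_inf (auxFixedAntitone le_sup_left) (auxFixedAntitone le_sup_right)
  · rw [IntermediateField.le_iff_le]
    exact sup_le ((IntermediateField.le_iff_le _ _).mp inf_le_left)
      ((IntermediateField.le_iff_le _ _).mp inf_le_right)

lemma auxFixedInf [FiniteDimensional F T] [IsGalois F T] (H K : Subgroup (T ≃ₐ[F] T)) :
    fixedField (H ⊓ K) = fixedField H ⊔ fixedField K := by
  conv_lhs => rw [← fixingSubgroup_fixedField H, ← fixingSubgroup_fixedField K,
    ← auxFixingSup, IsGalois.fixedField_fixingSubgroup]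

lemma auxFixingBot : fixingSubgroup (⊥ : IntermediateField F T) = ⊤ := by
  rw [eq_top_iff, ← IntermediateField.le_iff_le]; exact bot_le

lemma auxFixingTop : fixingSubgroup (⊤ : IntermediateField F T) = ⊥ := by
  rw [eq_bot_iff]
  intro σ hσ
  rw [Subgroup.mem_bot]
  ext x
  exact (IntermediateField.mem_fixingSubgroup_iff _ _ |>.mp hσ) x trivial

lemma auxFinrankFixed [FiniteDimensional F T] [IsGalois F T] (H : Subgroup (T ≃ₐ[F] T)) :
    Module.finrank F (fixedField H) = H.index := by
  classical
  have h1 : Module.finrank F (fixedField H) * Module.finrank (fixedField H) T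
      = Module.finrank F T := Module.finrank_mul_finrank F (fixedField H) T
  rw [IntermediateField.finrank_fixedField_eq_card H] at h1
  have h2 : Nat.card H * H.index = Nat.card (T ≃ₐ[F] T) := Subgroup.card_mul_index H
  have h3 : Nat.card (T ≃ₐ[F] T) = Module.finrank F T := by
    exact IsGalois.card_aut_eq_finrank F T
  have hcard : Fintype.card H = Nat.card H := (Nat.card_eq_fintype_card).symm
  have hpos : 0 < Nat.card H := Nat.card_pos
  apply Nat.eq_of_mul_eq_mul_right hpos
  rw [h1, ← h3, ← h2]
  exact Nat.mul_comm _ _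

end AuxGalois

section AuxComap

variable {F Ω : Type*} [Field F] [Field Ω] [Algebra F Ω]

lemma auxMapComap (T X : IntermediateField F Ω) (hX : X ≤ T) :
    (X.comap T.val).map T.val = X :=
  map_comap_eq_self (by rwa [fieldRange_val])

/-- The comap of `X ≤ T` along `T.val` is isomorphic to `X`. -/
noncomputable def auxComapEquiv (T X : IntermediateField F Ω) (hX : X ≤ T) :
    ↥(X.comap T.val) ≃ₐ[F] ↥X :=
  (equivMap (X.comap T.val) T.val).trans (equivOfEq (auxMapComap T X hX))

lemma auxComapTop (T : IntermediateField F Ω) : T.comap T.val = ⊤ := by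
  rw [eq_top_iff]; intro x _; exact x.2

lemma auxComapBot (T : IntermediateField F Ω) :
    (⊥ : IntermediateField F Ω).comap T.val = ⊥ := by
  apply le_antisymm _ bot_le
  intro x hx
  obtain ⟨c, hc⟩ := IntermediateField.mem_bot.mp hx
  refine IntermediateField.mem_bot.mpr ⟨c, ?_⟩
  apply Subtype.ext
  show (algebraMap (↥T) Ω) ((algebraMap F ↥T) c) = (algebraMap (↥T) Ω) x
  rw [← IsScalarTower.algebraMap_apply F (↥T) Ω c, hc]
  rfl

lemma auxComapInf (T X Y : IntermediateField F Ω) :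
    (X ⊓ Y).comap T.val = X.comap T.val ⊓ Y.comap T.val := rfl

lemma auxMapSup (T : IntermediateField F Ω) (X Y : IntermediateField F T) :
    (X ⊔ Y).map T.val = X.map T.val ⊔ Y.map T.val :=
  (gc_map_comap T.val).l_sup

lemma auxComapSup (T X Y : IntermediateField F Ω) (hX : X ≤ T) (hY : Y ≤ T) :
    (X ⊔ Y).comap T.val = X.comap T.val ⊔ Y.comap T.val := by
  apply map_injective T.val
  rw [auxMapSup, auxMapComap T X hX, auxMapComap T Y hY,
    auxMapComap T (X ⊔ Y) (sup_le hX hY)]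

end AuxComap

section AuxCover

open Polynomial

variable {F Ω : Type*} [Field F] [Field Ω] [Algebra F Ω]

lemma auxSepOfLe {X Y : IntermediateField F Ω} (h : X ≤ Y) [Algebra.IsSeparable F ↥Y] :
    Algebra.IsSeparable F ↥X :=
  Algebra.IsSeparable.of_algHom _ _ (inclusion h)

lemma auxGaloisBot : IsGalois F ((⊥ : IntermediateField F Ω) : IntermediateField F Ω) :=
  IsGalois.of_algEquiv (botEquiv F Ω).symm

/-- For `x` in a Galois subextension `Y`, the splitting field of `minpoly F x` inside `Ω`
is a finite Galois subextension of `Y`. -/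
lemma auxPiece (Y : IntermediateField F Ω) [hY : IsGalois F ↥Y] (x : Ω) (hx : x ∈ Y) :
    adjoin F ((minpoly F x).rootSet Ω) ≤ Y ∧
    IsGalois F ↥(adjoin F ((minpoly F x).rootSet Ω)) ∧
    FiniteDimensional F ↥(adjoin F ((minpoly F x).rootSet Ω)) := by
  have hint : IsIntegral F (⟨x, hx⟩ : ↥Y) := Algebra.IsIntegral.isIntegral _
  have hintx : IsIntegral F x := IntermediateField.isIntegral_iff.mp hint
  have hsplY : ((minpoly F x).map (algebraMap F ↥Y)).Splits := by
    have := hY.to_normal.splits (⟨x, hx⟩ : ↥Y)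
    rwa [IntermediateField.minpoly_eq] at this
  have hspl : ((minpoly F x).map (algebraMap F Ω)).Splits := by
    rw [IsScalarTower.algebraMap_eq F ↥Y Ω, ← Polynomial.map_map]
    exact hsplY.map _
  have hle : adjoin F ((minpoly F x).rootSet Ω) ≤ Y := by
    rw [adjoin_le_iff, ← hsplY.image_rootSet Y.val]
    rintro _ ⟨a, _, rfl⟩
    exact a.2
  refine ⟨hle, ?_, ?_⟩
  · have hn : Normal F ↥(adjoin F ((minpoly F x).rootSet Ω)) :=
      Normal.of_isSplittingField (hFEp := adjoin_rootSet_isSplittingField hspl)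
    have hsep : Algebra.IsSeparable F ↥(adjoin F ((minpoly F x).rootSet Ω)) := auxSepOfLe hle
    exact ⟨⟩
  · apply IntermediateField.finiteDimensional_adjoin
    intro y hy
    exact (IsAlgebraic.isIntegral ⟨minpoly F x, minpoly.ne_zero hintx, (mem_rootSet.mp hy).2⟩)

lemma auxFG (E : IntermediateField F Ω) [FiniteDimensional F ↥E] : E.FG := by
  apply E.fg_of_fg_toSubalgebra
  apply Subalgebra.fg_of_fg_toSubmodule
  exact (Submodule.fg_top _).mp (Module.finite_def.mp (inferInstanceAs (Module.Finite F ↥E)))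

lemma auxNormalBiSup {ι : Type*} (SS : Set ι) (f : ι → IntermediateField F Ω)
    [h : ∀ i, Normal F ↥(f i)] : Normal F ↥(⨆ i ∈ SS, f i) := by
  rw [← iSup_subtype'']
  exact IntermediateField.normal_iSup (h := fun i => h i)

lemma auxFinBiSup {ι : Type*} (SS : Set ι) (hfin : SS.Finite) (f : ι → IntermediateField F Ω)
    [h : ∀ i, FiniteDimensional F ↥(f i)] : FiniteDimensional F ↥(⨆ i ∈ SS, f i) := by
  haveI := hfin.to_subtype
  rw [← iSup_subtype'']
  exact IntermediateField.finiteDimensional_iSup_of_finite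

/-- Any finite-dimensional subextension of `L ⊔ M` (with `L`, `M` Galois) is contained in
`L₀ ⊔ M₀` for some finite Galois subextensions `L₀ ≤ L`, `M₀ ≤ M`. -/
lemma auxCover (L M E : IntermediateField F Ω) [hL : IsGalois F ↥L] [hM : IsGalois F ↥M]
    [FiniteDimensional F ↥E] (hE : E ≤ L ⊔ M) :
    ∃ L₀ M₀ : IntermediateField F Ω, L₀ ≤ L ∧ M₀ ≤ M ∧ IsGalois F ↥L₀ ∧ IsGalois F ↥M₀ ∧
      FiniteDimensional F ↥L₀ ∧ FiniteDimensional F ↥M₀ ∧ E ≤ L₀ ⊔ M₀ := by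
  classical
  obtain ⟨t, ht⟩ := auxFG E
  set tt : Bool → IntermediateField F Ω := Bool.rec M L with htt
  haveI hgal : ∀ b, IsGalois F ↥(tt b) := by rintro (_ | _) <;> assumption
  have halg : ∀ b, Algebra.IsAlgebraic F ↥(tt b) := fun b => (hgal b).to_normal.toIsAlgebraic
  have key : ∀ x ∈ t, ∃ s : Finset (Σ b, ↥(tt b)),
      x ∈ ⨆ i ∈ s, adjoin F ((minpoly F (i.2 : Ω)).rootSet Ω) := by
    intro x hxt
    have hx : x ∈ ⨆ b, tt b := by
      rw [iSup_bool_eq]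
      exact hE (ht ▸ subset_adjoin F (↑t : Set Ω) hxt)
    obtain ⟨s, hs⟩ := exists_finset_of_mem_supr'' halg hx
    refine ⟨s, ?_⟩
    convert hs using 4 with i
    rfl
    rw [IntermediateField.minpoly_eq]
  choose s hs using key
  have hPle : ∀ i : (Σ b, ↥(tt b)), adjoin F ((minpoly F (i.2 : Ω)).rootSet Ω) ≤ tt i.1 :=
    fun i => (auxPiece (tt i.1) (i.2 : Ω) i.2.2).1
  haveI hPgal : ∀ i : (Σ b, ↥(tt b)), IsGalois F ↥(adjoin F ((minpoly F (i.2 : Ω)).rootSet Ω)) :=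
    fun i => (auxPiece (tt i.1) (i.2 : Ω) i.2.2).2.1
  haveI hPfin : ∀ i : (Σ b, ↥(tt b)),
      FiniteDimensional F ↥(adjoin F ((minpoly F (i.2 : Ω)).rootSet Ω)) :=
    fun i => (auxPiece (tt i.1) (i.2 : Ω) i.2.2).2.2
  obtain ⟨S, hS⟩ : ∃ S : Finset (Σ b, ↥(tt b)), ∀ x (hxt : x ∈ t), ∀ i ∈ s x hxt, i ∈ S := by
    refine ⟨t.attach.biUnion (fun x => s x.1 x.2), ?_⟩
    intro x hxt i hi
    exact Finset.mem_biUnion.mpr ⟨⟨x, hxt⟩, Finset.mem_attach t _, hi⟩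
  -- the two pieces
  haveI hPnor : ∀ i : (Σ b, ↥(tt b)), Normal F ↥(adjoin F ((minpoly F (i.2 : Ω)).rootSet Ω)) :=
    fun i => (hPgal i).to_normal
  have hle1 : (⨆ i ∈ {i : (Σ b, ↥(tt b)) | i ∈ S ∧ i.1 = true},
      adjoin F ((minpoly F (i.2 : Ω)).rootSet Ω)) ≤ L := by
    apply iSup₂_le
    rintro ⟨b, y⟩ ⟨-, hb⟩
    have h := hPle ⟨b, y⟩
    cases b
    · exact absurd hb (by simp)
    · exact h
  have hle2 : (⨆ i ∈ {i : (Σ b, ↥(tt b)) | i ∈ S ∧ i.1 = false},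
      adjoin F ((minpoly F (i.2 : Ω)).rootSet Ω)) ≤ M := by
    apply iSup₂_le
    rintro ⟨b, y⟩ ⟨-, hb⟩
    have h := hPle ⟨b, y⟩
    cases b
    · exact h
    · exact absurd hb (by simp)
  haveI hnor1 := auxNormalBiSup {i : (Σ b, ↥(tt b)) | i ∈ S ∧ i.1 = true}
    (fun i => adjoin F ((minpoly F (i.2 : Ω)).rootSet Ω))
  haveI hnor2 := auxNormalBiSup {i : (Σ b, ↥(tt b)) | i ∈ S ∧ i.1 = false}
    (fun i => adjoin F ((minpoly F (i.2 : Ω)).rootSet Ω))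
  haveI hsep1 : Algebra.IsSeparable F ↥(⨆ i ∈ {i : (Σ b, ↥(tt b)) | i ∈ S ∧ i.1 = true},
      adjoin F ((minpoly F (i.2 : Ω)).rootSet Ω)) := by
    haveI := hL.to_isSeparable; exact auxSepOfLe (Y := L) hle1
  haveI hsep2 : Algebra.IsSeparable F ↥(⨆ i ∈ {i : (Σ b, ↥(tt b)) | i ∈ S ∧ i.1 = false},
      adjoin F ((minpoly F (i.2 : Ω)).rootSet Ω)) := by
    haveI := hM.to_isSeparable; exact auxSepOfLe (Y := M) hle2
  have hfin1 := auxFinBiSup {i : (Σ b, ↥(tt b)) | i ∈ S ∧ i.1 = true}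
    (S.finite_toSet.subset (fun i hi => hi.1))
    (fun i => adjoin F ((minpoly F (i.2 : Ω)).rootSet Ω))
  have hfin2 := auxFinBiSup {i : (Σ b, ↥(tt b)) | i ∈ S ∧ i.1 = false}
    (S.finite_toSet.subset (fun i hi => hi.1))
    (fun i => adjoin F ((minpoly F (i.2 : Ω)).rootSet Ω))
  refine ⟨_, _, hle1, hle2, ⟨⟩, ⟨⟩, hfin1, hfin2, ?_⟩
  rw [← ht, adjoin_le_iff]
  intro x hxt
  have hx := hs x hxt
  refine SetLike.le_def.mp ?_ hx
  apply iSup₂_le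
  rintro ⟨b, y⟩ hi
  have hiS := hS x hxt ⟨b, y⟩ hi
  cases b
  · refine le_trans ?_ (le_sup_right)
    exact le_biSup (fun i : (Σ b, ↥(tt b)) => adjoin F ((minpoly F (i.2 : Ω)).rootSet Ω))
      (show (⟨false, y⟩ : Σ b, ↥(tt b)) ∈ {i : (Σ b, ↥(tt b)) | i ∈ S ∧ i.1 = false} from
        ⟨hiS, rfl⟩)
  · refine le_trans ?_ (le_sup_left)
    exact le_biSup (fun i : (Σ b, ↥(tt b)) => adjoin F ((minpoly F (i.2 : Ω)).rootSet Ω))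
      (show (⟨true, y⟩ : Σ b, ↥(tt b)) ∈ {i : (Σ b, ↥(tt b)) | i ∈ S ∧ i.1 = true} from
        ⟨hiS, rfl⟩)

end AuxCover

section Main

variable {F Ω : Type*} [Field F] [Field Ω] [Algebra F Ω]

lemma pSocle_mono (p : ℕ) {K K' : IntermediateField F Ω} (h : K ≤ K') :
    pSocle p K ≤ pSocle p K' := by
  unfold pSocle
  apply iSup₂_le
  intro E hE
  exact le_biSup (fun E : IntermediateField F Ω => E) (show E ∈ {E : IntermediateField F Ω |
    E ≤ K' ∧ IsGalois F E ∧ Module.finrank F E = p} from ⟨le_trans hE.1 h, hE.2.1, hE.2.2⟩)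

lemma le_pSocle (p : ℕ) {K E : IntermediateField F Ω} (h1 : E ≤ K) (h2 : IsGalois F E)
    (h3 : Module.finrank F E = p) : E ≤ pSocle p K := by
  unfold pSocle
  exact le_biSup (fun E : IntermediateField F Ω => E) (show E ∈ {E : IntermediateField F Ω |
    E ≤ K ∧ IsGalois F E ∧ Module.finrank F E = p} from ⟨h1, h2, h3⟩)

/-- The key step: a degree-`p` Galois subextension of a compositum `L ⊔ M` of two finite
Galois extensions with `L ⊓ M = ⊥`, lies in `pSocle p L ⊔ pSocle p M`. -/
lemma auxMain (p : ℕ) (hp : p.Prime) (L M : IntermediateField F Ω)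
    (hL : IsGalois F L) (hM : IsGalois F M) (hinter : L ⊓ M = ⊥)
    (E : IntermediateField F Ω) (hEle : E ≤ L ⊔ M) (hEgal : IsGalois F E)
    (hEfin : Module.finrank F E = p) :
    E ≤ pSocle p L ⊔ pSocle p M := by
  haveI := hL; haveI := hM; haveI := hEgal
  haveI : FiniteDimensional F ↥E :=
    FiniteDimensional.of_finrank_pos (hEfin ▸ hp.pos)
  obtain ⟨L₀, M₀, hL₀L, hM₀M, hGL₀, hGM₀, hFL₀, hFM₀, hEle₀⟩ := auxCover L M E hEle
  haveI := hGL₀; haveI := hGM₀; haveI := hFL₀; haveI := hFM₀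
  set T : IntermediateField F Ω := L₀ ⊔ M₀ with hT
  haveI : Normal F ↥T := inferInstanceAs (Normal F ↥(L₀ ⊔ M₀))
  haveI : IsGalois F ↥T := ⟨⟩
  haveI : FiniteDimensional F ↥T := inferInstanceAs (FiniteDimensional F ↥(L₀ ⊔ M₀))
  -- move into T
  set L' : IntermediateField F ↥T := L₀.comap T.val with hL'
  set M' : IntermediateField F ↥T := M₀.comap T.val with hM'
  set E' : IntermediateField F ↥T := E.comap T.val with hE'
  haveI hGL' : IsGalois F ↥L' := IsGalois.of_algEquiv (auxComapEquiv T L₀ le_sup_left).symm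
  haveI hGM' : IsGalois F ↥M' := IsGalois.of_algEquiv (auxComapEquiv T M₀ le_sup_right).symm
  haveI hGE' : IsGalois F ↥E' := IsGalois.of_algEquiv (auxComapEquiv T E hEle₀).symm
  have hrankE' : Module.finrank F ↥E' = p := by
    rw [← hEfin]
    exact (auxComapEquiv T E hEle₀).toLinearEquiv.finrank_eq
  -- the subgroups
  set A : Subgroup (↥T ≃ₐ[F] ↥T) := M'.fixingSubgroup with hA
  set B : Subgroup (↥T ≃ₐ[F] ↥T) := L'.fixingSubgroup with hB
  set N : Subgroup (↥T ≃ₐ[F] ↥T) := E'.fixingSubgroup with hN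
  haveI hAnor : A.Normal := IsGalois.fixingSubgroup_normal_of_isGalois M'
  haveI hBnor : B.Normal := IsGalois.fixingSubgroup_normal_of_isGalois L'
  haveI lNnor : N.Normal := IsGalois.fixingSubgroup_normal_of_isGalois E'
  have hsupLM : L' ⊔ M' = ⊤ := by
    rw [hL', hM', ← auxComapSup T L₀ M₀ le_sup_left le_sup_right, ← hT, auxComapTop]
  have hinfLM : L' ⊓ M' = ⊥ := by
    have h0 : L₀ ⊓ M₀ = ⊥ := le_bot_iff.mp (hinter ▸ inf_le_inf hL₀L hM₀M)
    rw [hL', hM', ← auxComapInf, h0, auxComapBot]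
  have hAB : A ⊓ B = ⊥ := by
    rw [hA, hB, ← auxFixingSup, sup_comm, hsupLM, auxFixingTop]
  have hABsup : A ⊔ B = ⊤ := by
    rw [← IntermediateField.fixingSubgroup_fixedField (A ⊔ B), auxFixedSup,
      hA, hB, IsGalois.fixedField_fixingSubgroup, IsGalois.fixedField_fixingSubgroup,
      inf_comm, hinfLM, auxFixingBot]
  have hNidx : N.index = p := by
    have h := auxFinrankFixed N
    rw [hN, IsGalois.fixedField_fixingSubgroup] at h
    rw [← h, hrankE']
  -- the two auxiliary normal subgroups
  set NA : Subgroup (↥T ≃ₐ[F] ↥T) := (A ⊓ N) ⊔ B with hNA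
  set NB : Subgroup (↥T ≃ₐ[F] ↥T) := (B ⊓ N) ⊔ A with hNB
  haveI hNAnor : NA.Normal := Subgroup.sup_normal (A ⊓ N) B
  haveI hNBnor : NB.Normal := Subgroup.sup_normal (B ⊓ N) A
  have hNAidx : NA.index ∣ p := by
    rw [← hNidx]
    refine auxIndexDvd A NA N hNAnor lNnor ?_ le_sup_left
    rw [eq_top_iff, ← hABsup]
    exact sup_le le_sup_left (le_trans le_sup_right le_sup_right)
  have hNBidx : NB.index ∣ p := by
    rw [← hNidx]
    refine auxIndexDvd B NB N hNBnor lNnor ?_ le_sup_left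
    rw [eq_top_iff, ← hABsup]
    exact sup_le (le_trans le_sup_right le_sup_right) le_sup_left
  -- the two fixed fields
  set F1 : IntermediateField F ↥T := IntermediateField.fixedField NA with hF1
  set F2 : IntermediateField F ↥T := IntermediateField.fixedField NB with hF2
  haveI hF1gal : IsGalois F ↥F1 := IsGalois.of_fixedField_normal_subgroup NA
  haveI hF2gal : IsGalois F ↥F2 := IsGalois.of_fixedField_normal_subgroup NB
  have hF1le : F1 ≤ L' := by
    have := auxFixedAntitone (le_sup_right : B ≤ NA)
    rwa [hB, IsGalois.fixedField_fixingSubgroup] at this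
  have hF2le : F2 ≤ M' := by
    have := auxFixedAntitone (le_sup_right : A ≤ NB)
    rwa [hA, IsGalois.fixedField_fixingSubgroup] at this
  have hF1rank : Module.finrank F ↥F1 = NA.index := auxFinrankFixed NA
  have hF2rank : Module.finrank F ↥F2 = NB.index := auxFinrankFixed NB
  -- E' is contained in F1 ⊔ F2
  have hE'le : E' ≤ F1 ⊔ F2 := by
    have h1 : NA ⊓ NB ≤ N := auxGroupInf A B N hAnor hBnor hAB
    have h2 : E' = IntermediateField.fixedField N :=
      (IsGalois.fixedField_fixingSubgroup E').symm
    rw [h2, ← auxFixedInf]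
    exact auxFixedAntitone h1
  -- map everything back to Ω
  have hEmap : E = E'.map T.val := (auxMapComap T E hEle₀).symm
  have hstep : E ≤ (F1.map T.val) ⊔ (F2.map T.val) := by
    rw [hEmap, ← auxMapSup]
    exact IntermediateField.map_mono _ hE'le
  refine le_trans hstep (sup_le ?_ ?_)
  · -- F1 side, lands in pSocle p L
    have hle : F1.map T.val ≤ L := by
      refine le_trans (IntermediateField.map_mono _ hF1le) ?_
      rw [hL', auxMapComap T L₀ le_sup_left]
      exact hL₀L
    haveI : IsGalois F ↥(F1.map T.val) := IsGalois.of_algEquiv (equivMap F1 T.val)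
    have hrank : Module.finrank F ↥(F1.map T.val) = NA.index := by
      rw [← hF1rank]
      exact ((equivMap F1 T.val).toLinearEquiv.finrank_eq).symm
    rcases (Nat.Prime.eq_one_or_self_of_dvd hp _ hNAidx) with h1 | hp'
    · have : F1.map T.val = ⊥ := IntermediateField.finrank_eq_one_iff.mp (by rw [hrank, h1])
      rw [this]
      exact le_trans bot_le le_sup_left
    · exact le_trans (le_pSocle p hle inferInstance (by rw [hrank, hp'])) le_sup_left
  · -- F2 side, lands in pSocle p M
    have hle : F2.map T.val ≤ M := by
      refine le_trans (IntermediateField.map_mono _ hF2le) ?_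
      rw [hM', auxMapComap T M₀ le_sup_right]
      exact hM₀M
    haveI : IsGalois F ↥(F2.map T.val) := IsGalois.of_algEquiv (equivMap F2 T.val)
    have hrank : Module.finrank F ↥(F2.map T.val) = NB.index := by
      rw [← hF2rank]
      exact ((equivMap F2 T.val).toLinearEquiv.finrank_eq).symm
    rcases (Nat.Prime.eq_one_or_self_of_dvd hp _ hNBidx) with h1 | hp'
    · have : F2.map T.val = ⊥ := IntermediateField.finrank_eq_one_iff.mp (by rw [hrank, h1])
      rw [this]
      exact le_trans bot_le le_sup_right
    · exact le_trans (le_pSocle p hle inferInstance (by rw [hrank, hp'])) le_sup_right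

end Main

/-- If `L/F` and `M/F` are Galois extensions inside a common field with `L ∩ M = F`, then
the `p`-socle of `LM/F` is the compositum of the `p`-socles of `L/F` and `M/F`. -/
theorem stmt_6 (p : ℕ) (hp : p.Prime) {F Ω : Type*} [Field F] [Field Ω] [Algebra F Ω]
    (L M : IntermediateField F Ω) (hL : IsGalois F L) (hM : IsGalois F M)
    (hinter : L ⊓ M = ⊥) :
    pSocle p (L ⊔ M) = pSocle p L ⊔ pSocle p M := by
  apply le_antisymm
  · unfold pSocle
    apply iSup₂_le
    intro E hE
    exact auxMain p hp L M hL hM hinter E hE.1 hE.2.1 hE.2.2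
  · exact sup_le (pSocle_mono p le_sup_left) (pSocle_mono p le_sup_right)
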